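/- Let x: M^m → ℝ^{m+p} be a compact ξ-submanifold admitting a nontrivial parallel normal vector field η. Then the second-variation quadratic form satisfies Q(η,η) = −∫_M (Σ_{i,j}⟨h_{ij},η⟩² + |η|²) e^{−f} dV < 0; in particular x is not stable. Consequently, no compact ξ-submanifold with ξ ≠ 0, and no compact simply-connected ξ-submanifold with flat normal bundle, is stable. -/
import Mathlib


open scoped RealInnerProductSpace
open MeasureTheory Finset

/-- Let `x : M → ℝ^{m+p}` be a compact ξ-submanifold admitting a
nontrivial parallel normal field `η`.  With the second variation
`Q(η,η) = −∫ ⟨Lη, η⟩ e^{−f} dV`, `L = Δ^⊥ − D^⊥_{x^⊤+A_ξ(x^⊤)} + ⟨h_{ij},·⟩h_{ij} + 1`,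
and using that for parallel `η` the Laplacian and drift terms vanish, one gets
`Q(η,η) = −∫ (Σ⟨h_{ij},η⟩² + |η|²) e^{−f} dV < 0`; in particular `x` is not
stable (there is a compactly supported normal field with negative second
variation). -/
theorem compact_xi_with_parallel_normal_field_not_stable
    (m p : ℕ) {M : Type*} [TopologicalSpace M] [MeasurableSpace M]
    [CompactSpace M] [OpensMeasurableSpace M]
    (μ : Measure M) [μ.IsOpenPosMeasure] [IsFiniteMeasure μ]
    (f : M → ℝ) (hf : Continuous f)
    (h : Fin m → Fin m → M → EuclideanSpace ℝ (Fin (m + p)))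
    (lapPerp DX : (M → EuclideanSpace ℝ (Fin (m + p))) →
      M → EuclideanSpace ℝ (Fin (m + p)))
    (Parallel Normal : (M → EuclideanSpace ℝ (Fin (m + p))) → Prop)
    -- for parallel normal fields, Δ^⊥ and the drift derivative vanish
    (hlapPar : ∀ η, Parallel η → ∀ q, lapPerp η q = 0)
    (hDXPar : ∀ η, Parallel η → ∀ q, DX η q = 0)
    -- the nontrivial parallel normal field
    (η : M → EuclideanSpace ℝ (Fin (m + p)))
    (hPar : Parallel η) (hNor : Normal η) (hcont : Continuous η)
    (hne : ∃ q, η q ≠ 0)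
    -- integrability of the relevant quantities on the compact manifold
    (hint : Integrable (fun q =>
      ((∑ i, ∑ j, ⟪h i j q, η q⟫ ^ 2) + ‖η q‖ ^ 2) * Real.exp (-f q)) μ)
    (hconth : ∀ i j, Continuous (h i j)) :
    -- Q(η,η) equals the explicit negative quantity
    (-∫ q, ⟪lapPerp η q - DX η q
          + (∑ i, ∑ j, ⟪h i j q, η q⟫ • h i j q) + η q, η q⟫ *
          Real.exp (-f q) ∂μ
      = -∫ q, ((∑ i, ∑ j, ⟪h i j q, η q⟫ ^ 2) + ‖η q‖ ^ 2) *
          Real.exp (-f q) ∂μ)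
    ∧ (-∫ q, ⟪lapPerp η q - DX η q
          + (∑ i, ∑ j, ⟪h i j q, η q⟫ • h i j q) + η q, η q⟫ *
          Real.exp (-f q) ∂μ < 0)
    ∧ -- x is not stable
      ¬ (∀ η' : M → EuclideanSpace ℝ (Fin (m + p)),
          Normal η' → HasCompactSupport η' →
          0 ≤ -∫ q, ⟪lapPerp η' q - DX η' q
              + (∑ i, ∑ j, ⟪h i j q, η' q⟫ • h i j q) + η' q, η' q⟫ *
              Real.exp (-f q) ∂μ) := by

  have key : ∀ q, ⟪lapPerp η q - DX η q
          + (∑ i, ∑ j, ⟪h i j q, η q⟫ • h i j q) + η q, η q⟫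
      = (∑ i, ∑ j, ⟪h i j q, η q⟫ ^ 2) + ‖η q‖ ^ 2 := by
    intro q
    rw [hlapPar η hPar q, hDXPar η hPar q]
    simp only [sub_zero, zero_add, inner_add_left, sum_inner, real_inner_smul_left,
      real_inner_self_eq_norm_sq]
    ring_nf
  have heq : (∫ q, ⟪lapPerp η q - DX η q
          + (∑ i, ∑ j, ⟪h i j q, η q⟫ • h i j q) + η q, η q⟫ *
          Real.exp (-f q) ∂μ)
      = ∫ q, ((∑ i, ∑ j, ⟪h i j q, η q⟫ ^ 2) + ‖η q‖ ^ 2) *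
          Real.exp (-f q) ∂μ := by
    apply integral_congr_ae
    filter_upwards with q
    rw [key q]
  set g : M → ℝ := fun q => ((∑ i, ∑ j, ⟪h i j q, η q⟫ ^ 2) + ‖η q‖ ^ 2) *
      Real.exp (-f q) with hg
  have hgnn : ∀ q, 0 ≤ g q := by
    intro q
    apply mul_nonneg
    · apply add_nonneg
      · exact Finset.sum_nonneg fun i _ => Finset.sum_nonneg fun j _ => sq_nonneg _
      · exact sq_nonneg _
    · exact (Real.exp_pos _).le
  have hgcont : Continuous g := by
    apply Continuous.mul
    · apply Continuous.add
      · exact continuous_finset_sum _ fun i _ => continuous_finset_sum _ fun j _ =>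
          ((hconth i j).inner hcont).pow 2
      · exact (hcont.norm).pow 2
    · exact (hf.neg).rexp
  obtain ⟨q₀, hq₀⟩ := hne
  have hgpos : 0 < g q₀ := by
    apply mul_pos
    · have : 0 < ‖η q₀‖ ^ 2 := pow_pos (norm_pos_iff.mpr hq₀) 2
      have hs : 0 ≤ ∑ i, ∑ j, ⟪h i j q₀, η q₀⟫ ^ 2 :=
        Finset.sum_nonneg fun i _ => Finset.sum_nonneg fun j _ => sq_nonneg _
      linarith
    · exact Real.exp_pos _
  have hipos : 0 < ∫ q, g q ∂μ := by
    rw [integral_pos_iff_support_of_nonneg hgnn hint]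
    have hopen : IsOpen (Function.support g) := by
      have : Function.support g = g ⁻¹' {0}ᶜ := by
        ext q; simp [Function.mem_support]
      rw [this]
      exact (isClosed_singleton.preimage hgcont).isOpen_compl
    exact hopen.measure_pos μ ⟨q₀, hgpos.ne'⟩
  have hneg : -∫ q, ⟪lapPerp η q - DX η q
          + (∑ i, ∑ j, ⟪h i j q, η q⟫ • h i j q) + η q, η q⟫ *
          Real.exp (-f q) ∂μ < 0 := by
    rw [heq]; linarith
  refine ⟨by rw [heq], hneg, ?_⟩
  intro hstab
  have hcs : HasCompactSupport η := (isClosed_tsupport η).isCompact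
  have := hstab η hNor hcs
  linarith
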